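/- arXiv:1412.0392 — 2 statements merged into one kernel-verified Lean document; each statement's English description precedes it below -/
import Mathlib

section
/- The number of ordered k-tuples (m_1,...,m_k) of integers each at least 2 with m_1·...·m_k = m equals the alternating sum over i from 0 to k-1 of (-1)^i C(k,i) times the product over j of C(α_j + k - i - 1, k - i - 1). -/
/-- ν_ℓ(m,k): number of ordered k-tuples of integers each ≥ ℓ with product m. -/
noncomputable def nu (l m k : ℕ) : ℕ :=
  Nat.card {t : Fin k → ℕ // (∀ i, l ≤ t i) ∧ ∏ i, t i = m}

open Finset

noncomputable def nuT (l m : ℕ) (ι : Type*) [Fintype ι] : ℕ :=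
  Nat.card {t : ι → ℕ // (∀ i, l ≤ t i) ∧ ∏ i, t i = m}

lemma nuT_finite {ι : Type*} [Fintype ι] (l m : ℕ) (hm : m ≠ 0) :
    Finite {t : ι → ℕ // (∀ i, l ≤ t i) ∧ ∏ i, t i = m} := by
  have hle : ∀ t : {t : ι → ℕ // (∀ i, l ≤ t i) ∧ ∏ i, t i = m}, ∀ i, t.1 i ≤ m := by
    intro t i
    have h1 : t.1 i ∣ ∏ j, t.1 j := Finset.dvd_prod_of_mem t.1 (Finset.mem_univ i)
    rw [t.2.2] at h1
    exact Nat.le_of_dvd (Nat.pos_of_ne_zero hm) h1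
  exact Finite.of_injective
    (fun t => (fun i => (⟨t.1 i, Nat.lt_succ_of_le (hle t i)⟩ : Fin (m+1)) : ι → Fin (m+1)))
    (by intro a b h; apply Subtype.ext; funext i
        exact congrArg Fin.val (congrFun h i))

lemma nuT_congr {ι κ : Type*} [Fintype ι] [Fintype κ] (σ : ι ≃ κ) (l m : ℕ) :
    nuT l m ι = nuT l m κ := by
  apply Nat.card_congr
  refine ⟨fun t => ⟨fun j => t.1 (σ.symm j), fun j => t.2.1 _, ?_⟩,
         fun t => ⟨fun i => t.1 (σ i), fun i => t.2.1 _, ?_⟩, ?_, ?_⟩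
  · rw [Equiv.prod_comp σ.symm (fun i => t.1 i)]; exact t.2.2
  · rw [Equiv.prod_comp σ (fun j => t.1 j)]; exact t.2.2
  · intro t; apply Subtype.ext; funext i; simp
  · intro t; apply Subtype.ext; funext j; simp

lemma nu_eq_nuT (l m k : ℕ) : nu l m k = nuT l m (Fin k) := rfl

lemma nuT_eq_nu (l m : ℕ) (ι : Type*) [Fintype ι] : nuT l m ι = nu l m (Fintype.card ι) :=
  nuT_congr (Fintype.equivFin ι) l m

lemma card_comp (j n : ℕ) :
    Nat.card {e : Fin j → ℕ // ∑ i, e i = n} = (j + n - 1).choose n := by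
  have e1 : {e : Fin j → ℕ // ∑ i, e i = n} ≃ {e // e ∈ Finset.piAntidiag (univ : Finset (Fin j)) n} :=
    Equiv.subtypeEquivRight (fun e => by simp [Finset.mem_piAntidiag])
  rw [Nat.card_congr e1, Nat.card_eq_fintype_card, Fintype.card_coe,
    ← Finset.map_sym_eq_piAntidiag, Finset.card_map, Finset.sym_univ, Finset.card_univ,
    Sym.card_sym_eq_choose, Fintype.card_fin]

lemma nu_one (m : ℕ) (hm : m ≠ 0) (j : ℕ) :
    nu 1 m j = ∏ p ∈ m.primeFactors, (j + m.factorization p - 1).choose (m.factorization p) := by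
  have hprimepos : ∀ p : m.primeFactors, 0 < (p : ℕ) :=
    fun p => (Nat.prime_of_mem_primeFactors p.2).pos
  have E : {t : Fin j → ℕ // (∀ i, 1 ≤ t i) ∧ ∏ i, t i = m} ≃
      ((p : m.primeFactors) → {e : Fin j → ℕ // ∑ i, e i = m.factorization (p : ℕ)}) := by
    refine ⟨fun t p => ⟨fun i => (t.1 i).factorization p, ?_⟩,
      fun e => ⟨fun i => ∏ p ∈ m.primeFactors.attach, (p : ℕ) ^ (e p).1 i, ?_, ?_⟩, ?_, ?_⟩
    · have hne : ∀ i ∈ (univ : Finset (Fin j)), t.1 i ≠ 0 :=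
        fun i _ => Nat.one_le_iff_ne_zero.mp (t.2.1 i)
      have h := Nat.factorization_prod hne
      rw [t.2.2] at h
      have h2 := DFunLike.congr_fun h (p : ℕ)
      rw [Finsupp.finset_sum_apply] at h2
      exact h2.symm
    · intro i
      refine Nat.one_le_iff_ne_zero.mpr (Finset.prod_ne_zero_iff.mpr fun p _ => ?_)
      exact pow_ne_zero _ (hprimepos p).ne'
    · rw [Finset.prod_comm]
      have h1 : ∀ p ∈ m.primeFactors.attach,
          ∏ i, (p : ℕ) ^ (e p).1 i = (p : ℕ) ^ m.factorization (p : ℕ) := by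
        intro p _
        rw [Finset.prod_pow_eq_pow_sum, (e p).2]
      rw [Finset.prod_congr rfl h1,
        Finset.prod_attach m.primeFactors (fun p => p ^ m.factorization p)]
      conv_rhs => rw [← Nat.factorization_prod_pow_eq_self hm]
      rfl
    · intro t
      apply Subtype.ext; funext i
      simp only
      rw [Finset.prod_attach m.primeFactors (fun p => p ^ (t.1 i).factorization p)]
      have hd : t.1 i ∣ m := by
        have h1 : t.1 i ∣ ∏ x, t.1 x := Finset.dvd_prod_of_mem t.1 (Finset.mem_univ i)
        rwa [t.2.2] at h1
      have hdne : t.1 i ≠ 0 := Nat.one_le_iff_ne_zero.mp (t.2.1 i)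
      have hsub : (t.1 i).primeFactors ⊆ m.primeFactors := Nat.primeFactors_mono hd hm
      rw [← Finset.prod_subset hsub (fun p _ hp => by
        have h0 : (t.1 i).factorization p = 0 := by
          rw [← Nat.support_factorization] at hp
          exact Finsupp.notMem_support_iff.mp hp
        rw [h0, pow_zero])]
      conv_rhs => rw [← Nat.factorization_prod_pow_eq_self hdne]
      rfl
    · intro e
      funext p
      apply Subtype.ext; funext i
      simp only
      have hne : ∀ q ∈ m.primeFactors.attach, (q : ℕ) ^ (e q).1 i ≠ 0 :=
        fun q _ => pow_ne_zero _ (hprimepos q).ne'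
      have h := Nat.factorization_prod hne
      have h2 := DFunLike.congr_fun h (p : ℕ)
      rw [Finsupp.finset_sum_apply] at h2
      rw [h2]
      have h3 : ∀ q ∈ m.primeFactors.attach,
          (((q : ℕ) ^ (e q).1 i).factorization) (p : ℕ) =
            if q = p then (e q).1 i else 0 := by
        intro q _
        rw [(Nat.prime_of_mem_primeFactors q.2).factorization_pow, Finsupp.single_apply]
        congr 1
        exact propext Subtype.ext_iff.symm
      rw [Finset.sum_congr rfl h3, Finset.sum_ite_eq' m.primeFactors.attach p (fun q => (e q).1 i),
        if_pos (Finset.mem_attach _ p)]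
  rw [show nu 1 m j = Nat.card {t : Fin j → ℕ // (∀ i, 1 ≤ t i) ∧ ∏ i, t i = m} from rfl,
    Nat.card_congr E, Nat.card_pi]
  rw [← Finset.prod_attach m.primeFactors (fun p => (j + m.factorization p - 1).choose (m.factorization p))]
  rw [← Finset.prod_coe_sort_eq_attach]
  exact Finset.prod_congr rfl fun p _ => card_comp j (m.factorization p)

def fiber (m k : ℕ) (S : Finset (Fin k)) : Type :=
  {t : Fin k → ℕ // (∀ i, (i ∈ S → 2 ≤ t i) ∧ (i ∉ S → t i = 1)) ∧ ∏ i, t i = m}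

lemma fiber_cast (m k : ℕ) {S S' : Finset (Fin k)} (h : S = S') (x : fiber m k S)
    (y : fiber m k S') (hxy : x.1 = y.1) : HEq x y := by
  subst h; exact heq_of_eq (Subtype.ext hxy)

lemma fiber_equiv_sigma (m k : ℕ) :
    Nonempty ({t : Fin k → ℕ // (∀ i, 1 ≤ t i) ∧ ∏ i, t i = m} ≃ Σ S : Finset (Fin k), fiber m k S) := by
  classical
  refine ⟨⟨fun t => ⟨univ.filter (fun i => 2 ≤ t.1 i), t.1, fun i => ⟨fun h => (mem_filter.mp h).2,
      fun h => ?_⟩, t.2.2⟩,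
    fun S => ⟨S.2.1, fun i => ?_, S.2.2.2⟩, fun t => rfl, ?_⟩⟩
  · rw [mem_filter, not_and] at h
    have h1 := t.2.1 i
    have h2 := h (Finset.mem_univ i)
    omega
  · by_cases h : i ∈ S.1
    · exact le_trans one_le_two ((S.2.2.1 i).1 h)
    · rw [(S.2.2.1 i).2 h]
  · rintro ⟨S, t⟩
    have hS : (univ.filter fun i => 2 ≤ t.1 i) = S := by
      ext i
      rw [mem_filter]
      constructor
      · rintro ⟨-, h2⟩
        by_contra hi
        rw [(t.2.1 i).2 hi] at h2
        omega
      · intro hi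
        exact ⟨Finset.mem_univ i, (t.2.1 i).1 hi⟩
    exact Sigma.ext hS (fiber_cast m k hS _ _ rfl)

lemma fiber_equiv_restrict (m k : ℕ) (S : Finset (Fin k)) :
    Nonempty (fiber m k S ≃ {t : {x // x ∈ S} → ℕ // (∀ i, 2 ≤ t i) ∧ ∏ i, t i = m}) := by
  classical
  refine ⟨⟨fun t => ⟨fun i => t.1 i.1, fun i => (t.2.1 i.1).1 i.2, ?_⟩,
    fun s => ⟨fun i => if h : i ∈ S then s.1 ⟨i, h⟩ else 1,
      fun i => ⟨fun h => by dsimp only; rw [dif_pos h]; exact s.2.1 _,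
        fun h => by dsimp only; exact dif_neg h⟩, ?_⟩, ?_, ?_⟩⟩
  · rw [Finset.prod_coe_sort _ t.1]
    refine Eq.trans (Finset.prod_subset (Finset.subset_univ _) fun i _ hi => (t.2.1 i).2 hi) t.2.2
  · rw [← Finset.prod_subset (Finset.subset_univ S) (fun i _ hi => dif_neg hi),
      ← Finset.prod_attach S (fun i => if h : i ∈ S then s.1 ⟨i, h⟩ else 1),
      Finset.prod_congr rfl (fun i _ => dif_pos i.2), ← Finset.prod_coe_sort_eq_attach]
    simpa using s.2.2
  · intro t
    apply Subtype.ext; funext i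
    dsimp only
    split
    · rfl
    · next h => exact ((t.2.1 i).2 h).symm
  · intro s
    apply Subtype.ext; funext i
    simp

lemma nu_one_sum (m k : ℕ) (hm : m ≠ 0) :
    nu 1 m k = ∑ j ∈ range (k+1), k.choose j * nu 2 m j := by
  classical
  obtain ⟨E1⟩ := fiber_equiv_sigma m k
  have hfib : ∀ S : Finset (Fin k), Nat.card (fiber m k S) = nu 2 m S.card := by
    intro S
    obtain ⟨E2⟩ := fiber_equiv_restrict m k S
    rw [Nat.card_congr E2]
    have := nuT_eq_nu 2 m {x // x ∈ S}
    rw [nuT] at this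
    rw [this, Fintype.card_coe]
  have hfin : ∀ S : Finset (Fin k), Finite (fiber m k S) := by
    intro S
    obtain ⟨E2⟩ := fiber_equiv_restrict m k S
    have := nuT_finite (ι := {x // x ∈ S}) 2 m hm
    exact Finite.of_equiv _ E2.symm
  haveI := hfin
  haveI : ∀ S : Finset (Fin k), Fintype (fiber m k S) := fun S => Fintype.ofFinite _
  rw [nu, Nat.card_congr E1, Nat.card_eq_fintype_card, Fintype.card_sigma]
  have h1 : ∀ S : Finset (Fin k), Fintype.card (fiber m k S) = nu 2 m S.card := by
    intro S
    rw [← Nat.card_eq_fintype_card, hfib]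
  rw [Finset.sum_congr rfl (fun S _ => h1 S)]
  have h2 := Finset.sum_powerset_apply_card (f := fun j => nu 2 m j) (x := (univ : Finset (Fin k)))
  rw [Finset.powerset_univ, Finset.card_univ, Fintype.card_fin] at h2
  simpa [smul_eq_mul] using h2

lemma halt (n : ℕ) : ∑ d ∈ range (n+1), (-1:ℤ)^(n-d) * ((n.choose d) : ℤ) =
    if n = 0 then 1 else 0 := by
  have hterm : ∀ d ∈ range (n+1), (-1:ℤ)^(n-d) * ((n.choose d) : ℤ)
      = (-1:ℤ)^n * ((-1)^d * ((n.choose d) : ℤ)) := by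
    intro d hd; rw [mem_range] at hd
    have hs : (-1:ℤ)^(n-d) = (-1)^n * (-1)^d := by
      rw [← pow_add, show n + d = (n - d) + 2*d from by omega, pow_add, pow_mul]
      norm_num
    rw [hs]; ring
  rw [Finset.sum_congr rfl hterm, ← Finset.mul_sum, Int.alternating_sum_range_choose]
  by_cases h0 : n = 0 <;> simp [h0]

lemma binom_inv (F G : ℕ → ℤ) (k : ℕ)
    (h : ∀ j, j ≤ k → F j = ∑ r ∈ range (j+1), (j.choose r : ℤ) * G r) :
    ∑ i ∈ range (k+1), (-1:ℤ)^i * (k.choose i : ℤ) * F (k - i) = G k := by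
  have h' : ∀ j, j ≤ k → F j = ∑ r ∈ range (k+1), (j.choose r : ℤ) * G r := by
    intro j hj
    rw [h j hj]
    apply Finset.sum_subset (by intro x hx; rw [mem_range] at *; omega)
    intro r hr hr2
    rw [mem_range] at hr
    rw [Nat.choose_eq_zero_of_lt (by rw [mem_range] at hr2; omega), Nat.cast_zero, zero_mul]
  have hrefl : ∑ i ∈ range (k+1), (-1:ℤ)^i * (k.choose i : ℤ) * F (k - i)
      = ∑ j ∈ range (k+1), (-1:ℤ)^(k-j) * (k.choose j : ℤ) * F j := by
    rw [← Finset.sum_range_reflect (fun j => (-1:ℤ)^(k-j) * (k.choose j : ℤ) * F j) (k+1)]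
    apply Finset.sum_congr rfl
    intro i hi
    rw [mem_range] at hi
    have hik : i ≤ k := by omega
    rw [show k + 1 - 1 - i = k - i from by omega, show k - (k - i) = i from by omega,
      Nat.choose_symm hik]
  rw [hrefl]
  have key : ∀ r ∈ range (k+1),
      (∑ j ∈ range (k+1), (-1:ℤ)^(k-j) * (k.choose j : ℤ) * (((j.choose r : ℕ) : ℤ) * G r))
        = if r = k then G r else 0 := by
    intro r hrm
    rw [mem_range] at hrm
    have hr : r ≤ k := by omega
    have hsub : Finset.Ico r (k+1) ⊆ range (k+1) := by
      intro x hx; rw [Finset.mem_Ico] at hx; rw [mem_range]; omega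
    rw [show (∑ j ∈ range (k+1), (-1:ℤ)^(k-j) * (k.choose j : ℤ) * (((j.choose r : ℕ) : ℤ) * G r))
        = ∑ j ∈ Finset.Ico r (k+1), (-1:ℤ)^(k-j) * (k.choose j : ℤ) * (((j.choose r : ℕ) : ℤ) * G r)
      from (Finset.sum_subset hsub (by
        intro j hj hj2
        rw [mem_range] at hj
        simp only [Finset.mem_Ico, not_and, not_lt] at hj2
        have hjr : j < r := by
          by_contra hc
          push_neg at hc
          have := hj2 hc
          omega
        rw [Nat.choose_eq_zero_of_lt hjr]
        push_cast; ring)).symm]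
    rw [Finset.sum_Ico_eq_sum_range]
    rw [show k + 1 - r = (k - r) + 1 from by omega]
    have hterm : ∀ d ∈ range ((k-r)+1),
        (-1:ℤ)^(k-(r+d)) * (k.choose (r+d) : ℤ) * ((((r+d).choose r : ℕ) : ℤ) * G r)
        = ((k.choose r : ℤ) * G r) * ((-1:ℤ)^((k-r)-d) * (((k-r).choose d : ℕ) : ℤ)) := by
      intro d hd; rw [mem_range] at hd
      have h1 : r + d ≤ k := by omega
      have h2 := Nat.choose_mul (n := k) (Nat.le_add_right r d)
      rw [show r + d - r = d from by omega] at h2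
      have h3 : (k.choose (r+d) : ℤ) * (((r+d).choose r : ℕ) : ℤ)
          = (k.choose r : ℤ) * (((k-r).choose d : ℕ) : ℤ) := by exact_mod_cast h2
      rw [show k - (r+d) = (k-r) - d from by omega]
      calc (-1:ℤ)^((k-r)-d) * (k.choose (r+d) : ℤ) * ((((r+d).choose r : ℕ) : ℤ) * G r)
          = (-1:ℤ)^((k-r)-d) * ((k.choose (r+d) : ℤ) * (((r+d).choose r : ℕ) : ℤ)) * G r := by
            ring
        _ = (-1:ℤ)^((k-r)-d) * ((k.choose r : ℤ) * (((k-r).choose d : ℕ) : ℤ)) * G r := by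
            rw [h3]
        _ = ((k.choose r : ℤ) * G r) * ((-1:ℤ)^((k-r)-d) * (((k-r).choose d : ℕ) : ℤ)) := by
            ring
    rw [Finset.sum_congr rfl hterm, ← Finset.mul_sum, halt (k-r)]
    by_cases hrk : r = k
    · subst hrk; simp
    · have h0 : k - r ≠ 0 := by omega
      simp [h0, hrk]
  calc ∑ j ∈ range (k+1), (-1:ℤ)^(k-j) * (k.choose j : ℤ) * F j
      = ∑ j ∈ range (k+1), ∑ r ∈ range (k+1),
          (-1:ℤ)^(k-j) * (k.choose j : ℤ) * (((j.choose r : ℕ) : ℤ) * G r) := by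
        apply Finset.sum_congr rfl
        intro j hj
        rw [mem_range] at hj
        rw [h' j (by omega), Finset.mul_sum]
    _ = ∑ r ∈ range (k+1), ∑ j ∈ range (k+1),
          (-1:ℤ)^(k-j) * (k.choose j : ℤ) * (((j.choose r : ℕ) : ℤ) * G r) := Finset.sum_comm
    _ = ∑ r ∈ range (k+1), if r = k then G r else 0 := Finset.sum_congr rfl key
    _ = G k := by rw [Finset.sum_ite_eq' (range (k+1)) k G]; simp


theorem stmt_1 (m k : ℕ) (hm : 1 < m) (hk : 0 < k) :
    (nu 2 m k : ℤ) = ∑ i ∈ Finset.range k, (-1 : ℤ) ^ i * Nat.choose k i *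
      ∏ p ∈ m.primeFactors, Nat.choose (m.factorization p + k - i - 1) (k - i - 1) := by
  have hm0 : m ≠ 0 := by omega
  set F : ℕ → ℤ := fun j => (nu 1 m j : ℤ) with hF
  set G : ℕ → ℤ := fun j => (nu 2 m j : ℤ) with hG
  have h : ∀ j, j ≤ k → F j = ∑ r ∈ Finset.range (j+1), (j.choose r : ℤ) * G r := by
    intro j hj
    simp only [hF, hG]
    rw [nu_one_sum m j hm0]
    push_cast
    rfl
  have hinv := binom_inv F G k h
  have hF0 : F 0 = 0 := by
    simp only [hF]
    norm_cast
    have hemp : IsEmpty {t : Fin 0 → ℕ // (∀ i, 1 ≤ t i) ∧ ∏ i, t i = m} := by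
      refine ⟨fun t => ?_⟩
      have h2 := t.2.2
      simp at h2
      omega
    rw [nu]
    exact Nat.card_of_isEmpty
  rw [Finset.sum_range_succ, show k - k = 0 from by omega, hF0, mul_zero, add_zero] at hinv
  rw [show (nu 2 m k : ℤ) = G k from rfl, ← hinv]
  apply Finset.sum_congr rfl
  intro i hi
  rw [Finset.mem_range] at hi
  congr 1
  simp only [hF]
  rw [nu_one m hm0 (k-i)]
  push_cast
  apply Finset.prod_congr rfl
  intro p _
  congr 1
  have hki : 1 ≤ k - i := by omega
  rw [show k - i + m.factorization p - 1 = m.factorization p + k - i - 1 from by omega,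
    ← Nat.choose_symm (show m.factorization p ≤ m.factorization p + k - i - 1 from by omega)]
  congr 1
  omega
end

section
/- For m > 1 with prime factorization p_1^{α_1}···p_n^{α_n}, the number of triples (x,y,z) of positive integers with x ≤ y ≤ z and xyz = m equals (1/6)∏_j C(α_j+2,2) + (1/2)∏_j ⌊(α_j+2)/2⌋ + ε_3(m)/3, where ε_3(m) = 1 if m is a perfect cube and 0 otherwise. -/
open scoped Classical

/-- ε_i(m): 1 if m is a perfect i-th power, else 0. -/
noncomputable def eps (i m : ℕ) : ℕ := if ∃ e : ℕ, e ^ i = m then 1 else 0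

namespace Stmt10Aux

open Finset


def T (n : ℕ) : Finset (ℕ × ℕ × ℕ) :=
  (n.divisors ×ˢ n.divisors ×ˢ n.divisors).filter fun t => t.1 * t.2.1 * t.2.2 = n

def Pf (n : ℕ) : Finset (ℕ × ℕ) :=
  (n.divisors ×ˢ n.divisors).filter fun q => q.1 * q.1 * q.2 = n

lemma mem_T {n : ℕ} (hn : n ≠ 0) {t : ℕ × ℕ × ℕ} :
    t ∈ T n ↔ t.1 * t.2.1 * t.2.2 = n := by
  obtain ⟨x, y, z⟩ := t
  simp only [T, mem_filter, mem_product, Nat.mem_divisors]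
  refine ⟨fun h => h.2, fun h => ?_⟩
  have hx : x ∣ n := ⟨y * z, by rw [← h]; ring⟩
  have hy : y ∣ n := ⟨x * z, by rw [← h]; ring⟩
  have hz : z ∣ n := ⟨x * y, by rw [← h]; ring⟩
  exact ⟨⟨⟨hx, hn⟩, ⟨hy, hn⟩, hz, hn⟩, h⟩

lemma mem_Pf {n : ℕ} (hn : n ≠ 0) {q : ℕ × ℕ} :
    q ∈ Pf n ↔ q.1 * q.1 * q.2 = n := by
  obtain ⟨x, z⟩ := q
  simp only [Pf, mem_filter, mem_product, Nat.mem_divisors]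
  refine ⟨fun h => h.2, fun h => ?_⟩
  have hx : x ∣ n := ⟨x * z, by rw [← h]; ring⟩
  have hz : z ∣ n := ⟨x * x, by rw [← h]; ring⟩
  exact ⟨⟨⟨hx, hn⟩, hz, hn⟩, h⟩

def sort3 (t : ℕ × ℕ × ℕ) : ℕ × ℕ × ℕ :=
  (min t.1 (min t.2.1 t.2.2),
   t.1 + t.2.1 + t.2.2 - min t.1 (min t.2.1 t.2.2) - max t.1 (max t.2.1 t.2.2),
   max t.1 (max t.2.1 t.2.2))

lemma minmax3 (x y z : ℕ) :
    min x (min y z) ≤ x ∧ min x (min y z) ≤ y ∧ min x (min y z) ≤ z ∧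
    x ≤ max x (max y z) ∧ y ≤ max x (max y z) ∧ z ≤ max x (max y z) ∧
    (min x (min y z) = x ∨ min x (min y z) = y ∨ min x (min y z) = z) ∧
    (max x (max y z) = x ∨ max x (max y z) = y ∨ max x (max y z) = z) := by
  refine ⟨min_le_left _ _, le_trans (min_le_right _ _) (min_le_left _ _),
    le_trans (min_le_right _ _) (min_le_right _ _), le_max_left _ _,
    le_trans (le_max_left _ _) (le_max_right _ _),
    le_trans (le_max_right _ _) (le_max_right _ _), ?_, ?_⟩
  · rcases min_choice x (min y z) with h | h
    · exact Or.inl h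
    · rw [h]; rcases min_choice y z with h' | h' <;> rw [h'] <;> tauto
  · rcases max_choice x (max y z) with h | h
    · exact Or.inl h
    · rw [h]; rcases max_choice y z with h' | h' <;> rw [h'] <;> tauto

set_option maxHeartbeats 1000000 in
lemma sort3_eq_iff {a b c : ℕ} (hab : a ≤ b) (hbc : b ≤ c) (t : ℕ × ℕ × ℕ) :
    sort3 t = (a, b, c) ↔
      t = (a,b,c) ∨ t = (a,c,b) ∨ t = (b,a,c) ∨ t = (b,c,a) ∨ t = (c,a,b) ∨ t = (c,b,a) := by
  obtain ⟨x, y, z⟩ := t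
  have H := minmax3 x y z
  simp only [sort3, Prod.mk.injEq]
  generalize hA : min x (min y z) = A at H ⊢
  generalize hC : max x (max y z) = C at H ⊢
  obtain ⟨h1, h2, h3, h4, h5, h6, hA', hC'⟩ := H
  rcases hA' with rfl | rfl | rfl <;> rcases hC' with h | h | h <;> omega

lemma sort3_sorted (t : ℕ × ℕ × ℕ) :
    (sort3 t).1 ≤ (sort3 t).2.1 ∧ (sort3 t).2.1 ≤ (sort3 t).2.2 := by
  obtain ⟨x, y, z⟩ := t
  have H := minmax3 x y z
  simp only [sort3]
  omega

lemma sort3_mul (t : ℕ × ℕ × ℕ) :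
    (sort3 t).1 * (sort3 t).2.1 * (sort3 t).2.2 = t.1 * t.2.1 * t.2.2 := by
  obtain ⟨x, y, z⟩ := t
  rcases hs : sort3 (x, y, z) with ⟨a, b, c⟩
  have hsort := sort3_sorted (x, y, z)
  rw [hs] at hsort
  have h6 := (sort3_eq_iff hsort.1 hsort.2 _).mp hs
  simp only [Prod.mk.injEq] at h6
  rcases h6 with ⟨rfl,rfl,rfl⟩|⟨rfl,rfl,rfl⟩|⟨rfl,rfl,rfl⟩|⟨rfl,rfl,rfl⟩|⟨rfl,rfl,rfl⟩|⟨rfl,rfl,rfl⟩ <;>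
    ring

lemma sort3_pair (x z : ℕ) :
    sort3 (x, x, z) = if x ≤ z then (x, x, z) else (z, x, x) := by
  have H := minmax3 x x z
  simp only [sort3, Prod.ext_iff]
  split_ifs with h <;> simp only [Prod.mk.injEq] <;> omega


lemma gcd_mul_gcd {a b x : ℕ} (hab : Nat.Coprime a b) (hx : x ∣ a * b) :
    Nat.gcd x a * Nat.gcd x b = x :=
  (Nat.gcd_mul_gcd_eq_iff_dvd_mul_of_coprime hab).mpr hx

lemma gcd_split3 {a b x y z : ℕ} (ha : a ≠ 0) (hab : Nat.Coprime a b)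
    (h : x * y * z = a * b) :
    Nat.gcd x a * Nat.gcd y a * Nat.gcd z a = a := by
  have hx : Nat.gcd x a * Nat.gcd x b = x := gcd_mul_gcd hab ⟨y * z, by rw [← h]; ring⟩
  have hy : Nat.gcd y a * Nat.gcd y b = y := gcd_mul_gcd hab ⟨x * z, by rw [← h]; ring⟩
  have hz : Nat.gcd z a * Nat.gcd z b = z := gcd_mul_gcd hab ⟨x * y, by rw [← h]; ring⟩
  set u := Nat.gcd x a * Nat.gcd y a * Nat.gcd z a with hu
  set v := Nat.gcd x b * Nat.gcd y b * Nat.gcd z b with hv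
  have huv : u * v = a * b := by
    calc u * v = (Nat.gcd x a * Nat.gcd x b) * (Nat.gcd y a * Nat.gcd y b)
        * (Nat.gcd z a * Nat.gcd z b) := by rw [hu, hv]; ring
      _ = x * y * z := by rw [hx, hy, hz]
      _ = a * b := h
  have hua3 : u ∣ a * a * a :=
    mul_dvd_mul (mul_dvd_mul (Nat.gcd_dvd_right _ _) (Nat.gcd_dvd_right _ _))
      (Nat.gcd_dvd_right _ _)
  have hvb3 : v ∣ b * b * b :=
    mul_dvd_mul (mul_dvd_mul (Nat.gcd_dvd_right _ _) (Nat.gcd_dvd_right _ _))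
      (Nat.gcd_dvd_right _ _)
  have hub : Nat.Coprime u b := Nat.Coprime.coprime_dvd_left hua3
    ((hab.mul hab).mul hab)
  have hav : Nat.Coprime a v := Nat.Coprime.coprime_dvd_right hvb3
    ((hab.mul_right hab).mul_right hab)
  have h1 : u ∣ a := hub.dvd_of_dvd_mul_right ⟨v, huv.symm ▸ rfl⟩
  have h2 : a ∣ u := hav.dvd_of_dvd_mul_right ⟨b, by rw [huv]⟩
  exact Nat.dvd_antisymm h1 h2

lemma T_mul {a b : ℕ} (ha : a ≠ 0) (hb : b ≠ 0) (hab : Nat.Coprime a b) :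
    (T (a * b)).card = (T a).card * (T b).card := by
  have habn : a * b ≠ 0 := mul_ne_zero ha hb
  rw [← Finset.card_product]
  apply card_nbij'
    (fun t => ((Nat.gcd t.1 a, Nat.gcd t.2.1 a, Nat.gcd t.2.2 a),
               (Nat.gcd t.1 b, Nat.gcd t.2.1 b, Nat.gcd t.2.2 b)))
    (fun q => (q.1.1 * q.2.1, q.1.2.1 * q.2.2.1, q.1.2.2 * q.2.2.2))
  · rintro ⟨x, y, z⟩ ht
    rw [Finset.mem_coe, mem_T habn] at ht
    dsimp only at ht ⊢
    rw [Finset.mem_coe, Finset.mem_product]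
    constructor
    · rw [mem_T ha]; exact gcd_split3 ha hab ht
    · rw [mem_T hb]; exact gcd_split3 hb hab.symm (by rw [ht]; ring)
  · rintro ⟨⟨x1, y1, z1⟩, ⟨x2, y2, z2⟩⟩ hq
    rw [Finset.mem_coe, Finset.mem_product, mem_T ha, mem_T hb] at hq
    obtain ⟨h1, h2⟩ := hq
    dsimp only at h1 h2 ⊢
    rw [Finset.mem_coe, mem_T habn]
    dsimp only
    rw [← h1, ← h2]; ring
  · rintro ⟨x, y, z⟩ ht
    rw [Finset.mem_coe, mem_T habn] at ht
    dsimp only at ht ⊢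
    have hx : Nat.gcd x a * Nat.gcd x b = x := gcd_mul_gcd hab ⟨y * z, by rw [← ht]; ring⟩
    have hy : Nat.gcd y a * Nat.gcd y b = y := gcd_mul_gcd hab ⟨x * z, by rw [← ht]; ring⟩
    have hz : Nat.gcd z a * Nat.gcd z b = z := gcd_mul_gcd hab ⟨x * y, by rw [← ht]; ring⟩
    simp [Prod.ext_iff, hx, hy, hz]
  · rintro ⟨⟨x1, y1, z1⟩, ⟨x2, y2, z2⟩⟩ hq
    rw [Finset.mem_coe, Finset.mem_product, mem_T ha, mem_T hb] at hq
    obtain ⟨h1, h2⟩ := hq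
    dsimp only at h1 h2 ⊢
    have hx1 : x1 ∣ a := ⟨y1 * z1, by rw [← h1]; ring⟩
    have hy1 : y1 ∣ a := ⟨x1 * z1, by rw [← h1]; ring⟩
    have hz1 : z1 ∣ a := ⟨x1 * y1, by rw [← h1]; ring⟩
    have hx2 : x2 ∣ b := ⟨y2 * z2, by rw [← h2]; ring⟩
    have hy2 : y2 ∣ b := ⟨x2 * z2, by rw [← h2]; ring⟩
    have hz2 : z2 ∣ b := ⟨x2 * y2, by rw [← h2]; ring⟩
    have e1 : ∀ u v : ℕ, u ∣ a → v ∣ b → Nat.gcd (u * v) a = u := by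
      intro u v hu hv
      rw [Nat.Coprime.gcd_mul_right_cancel u (Nat.Coprime.coprime_dvd_left hv hab.symm)]
      exact Nat.gcd_eq_left hu
    have e2 : ∀ u v : ℕ, u ∣ a → v ∣ b → Nat.gcd (u * v) b = v := by
      intro u v hu hv
      rw [mul_comm, Nat.Coprime.gcd_mul_right_cancel v (Nat.Coprime.coprime_dvd_left hu hab)]
      exact Nat.gcd_eq_left hv
    simp [Prod.ext_iff, e1, e2, hx1, hy1, hz1, hx2, hy2, hz2]

lemma Pf_mul {a b : ℕ} (ha : a ≠ 0) (hb : b ≠ 0) (hab : Nat.Coprime a b) :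
    (Pf (a * b)).card = (Pf a).card * (Pf b).card := by
  have habn : a * b ≠ 0 := mul_ne_zero ha hb
  rw [← Finset.card_product]
  apply card_nbij'
    (fun q => ((Nat.gcd q.1 a, Nat.gcd q.2 a), (Nat.gcd q.1 b, Nat.gcd q.2 b)))
    (fun q => (q.1.1 * q.2.1, q.1.2 * q.2.2))
  · rintro ⟨x, z⟩ ht
    rw [Finset.mem_coe, mem_Pf habn] at ht
    dsimp only at ht ⊢
    rw [Finset.mem_coe, Finset.mem_product]
    constructor
    · rw [mem_Pf ha]; exact gcd_split3 ha hab ht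
    · rw [mem_Pf hb]; exact gcd_split3 hb hab.symm (by rw [ht]; ring)
  · rintro ⟨⟨x1, z1⟩, ⟨x2, z2⟩⟩ hq
    rw [Finset.mem_coe, Finset.mem_product, mem_Pf ha, mem_Pf hb] at hq
    obtain ⟨h1, h2⟩ := hq
    dsimp only at h1 h2 ⊢
    rw [Finset.mem_coe, mem_Pf habn]
    dsimp only
    rw [← h1, ← h2]; ring
  · rintro ⟨x, z⟩ ht
    rw [Finset.mem_coe, mem_Pf habn] at ht
    dsimp only at ht ⊢
    have hx : Nat.gcd x a * Nat.gcd x b = x := gcd_mul_gcd hab ⟨x * z, by rw [← ht]; ring⟩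
    have hz : Nat.gcd z a * Nat.gcd z b = z := gcd_mul_gcd hab ⟨x * x, by rw [← ht]; ring⟩
    simp [Prod.ext_iff, hx, hz]
  · rintro ⟨⟨x1, z1⟩, ⟨x2, z2⟩⟩ hq
    rw [Finset.mem_coe, Finset.mem_product, mem_Pf ha, mem_Pf hb] at hq
    obtain ⟨h1, h2⟩ := hq
    dsimp only at h1 h2 ⊢
    have hx1 : x1 ∣ a := ⟨x1 * z1, by rw [← h1]; ring⟩
    have hz1 : z1 ∣ a := ⟨x1 * x1, by rw [← h1]; ring⟩
    have hx2 : x2 ∣ b := ⟨x2 * z2, by rw [← h2]; ring⟩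
    have hz2 : z2 ∣ b := ⟨x2 * x2, by rw [← h2]; ring⟩
    have e1 : ∀ u v : ℕ, u ∣ a → v ∣ b → Nat.gcd (u * v) a = u := by
      intro u v hu hv
      rw [Nat.Coprime.gcd_mul_right_cancel u (Nat.Coprime.coprime_dvd_left hv hab.symm)]
      exact Nat.gcd_eq_left hu
    have e2 : ∀ u v : ℕ, u ∣ a → v ∣ b → Nat.gcd (u * v) b = v := by
      intro u v hu hv
      rw [mul_comm, Nat.Coprime.gcd_mul_right_cancel v (Nat.Coprime.coprime_dvd_left hu hab)]
      exact Nat.gcd_eq_left hv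
    simp [Prod.ext_iff, e1, e2, hx1, hz1, hx2, hz2]


lemma T_one : (T 1).card = 1 := by
  have : T 1 = {(1, 1, 1)} := by
    ext ⟨x, y, z⟩
    rw [mem_T one_ne_zero]
    simp only [mem_singleton, Prod.mk.injEq]
    constructor
    · intro h
      simp only [mul_eq_one] at h
      tauto
    · rintro ⟨rfl, rfl, rfl⟩; rfl
  rw [this, card_singleton]

lemma Pf_one : (Pf 1).card = 1 := by
  have : Pf 1 = {(1, 1)} := by
    ext ⟨x, z⟩
    rw [mem_Pf one_ne_zero]
    simp only [mem_singleton, Prod.mk.injEq]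
    constructor
    · intro h
      simp only [mul_eq_one] at h
      tauto
    · rintro ⟨rfl, rfl⟩; rfl
  rw [this, card_singleton]

lemma T_zero : (T 0).card = 0 := by simp [T]

lemma Pf_zero : (Pf 0).card = 0 := by simp [Pf]


lemma choose_two_mul_two (k : ℕ) : (k + 2).choose 2 * 2 = (k + 2) * (k + 1) := by
  induction k with
  | zero => decide
  | succ n ih =>
    have h : (n + 3).choose 2 = (n + 2).choose 1 + (n + 2).choose 2 :=
      Nat.choose_succ_succ (n + 2) 1
    have h1 : (n + 2).choose 1 = n + 2 := Nat.choose_one_right _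
    have h2 : (n + 1 + 2) * (n + 1 + 1) = (n + 2) * (n + 1) + 2 * (n + 2) := by ring
    rw [show n + 1 + 2 = n + 3 from rfl, h, h1, h2, ← ih]
    ring

lemma count_pairs (k : ℕ) :
    (((range (k + 1)) ×ˢ (range (k + 1))).filter fun q => q.1 + q.2 ≤ k).card
      = (k + 2).choose 2 := by
  have he : ((range (k + 1)) ×ˢ (range (k + 1))).filter (fun q => q.1 + q.2 ≤ k) =
      (range (k + 1)).biUnion (fun s => Finset.HasAntidiagonal.antidiagonal s) := by
    ext ⟨i, j⟩
    simp only [mem_filter, mem_product, mem_range, mem_biUnion, Finset.HasAntidiagonal.mem_antidiagonal]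
    constructor
    · intro h
      exact ⟨i + j, by omega, rfl⟩
    · rintro ⟨s, hs, h⟩
      omega
  rw [he, card_biUnion]
  · have e1 : ∀ s ∈ range (k + 1), (Finset.HasAntidiagonal.antidiagonal s).card = s + 1 := by
      intro s _; exact Finset.Nat.card_antidiagonal s
    rw [Finset.sum_congr rfl e1]
    have h4 : ∑ s ∈ range (k + 1), (s + 1) = ∑ i ∈ range (k + 2), i := by
      rw [Finset.sum_range_succ' (fun i => i) (k + 1)]
      simp
    rw [h4, Finset.sum_range_id, Nat.choose_two_right]
  · intro x _ y _ hxy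
    rw [Function.onFun, Finset.disjoint_left]
    intro a ha ha'
    rw [Finset.HasAntidiagonal.mem_antidiagonal] at ha ha'
    omega

lemma fact_pow_self {p : ℕ} (hp : p.Prime) (i : ℕ) : (p ^ i).factorization p = i := by
  rw [hp.factorization_pow]; exact Finsupp.single_eq_same

lemma T_prime_pow {p : ℕ} (hp : p.Prime) (k : ℕ) :
    (T (p ^ k)).card = (k + 2).choose 2 := by
  have hpk : p ^ k ≠ 0 := pow_ne_zero k hp.pos.ne'
  rw [← count_pairs k]
  apply card_nbij' (fun t => (t.1.factorization p, t.2.1.factorization p))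
    (fun q => (p ^ q.1, p ^ q.2, p ^ (k - q.1 - q.2)))
  · rintro ⟨x, y, z⟩ ht
    rw [Finset.mem_coe, mem_T hpk] at ht
    dsimp only at ht ⊢
    obtain ⟨i, hik, rfl⟩ := (Nat.dvd_prime_pow hp).mp (show x ∣ p ^ k from ⟨y * z, by rw [← ht]; ring⟩)
    obtain ⟨j, hjk, rfl⟩ := (Nat.dvd_prime_pow hp).mp (show y ∣ p ^ k from ⟨p ^ i * z, by rw [← ht]; ring⟩)
    obtain ⟨l, hlk, rfl⟩ := (Nat.dvd_prime_pow hp).mp (show z ∣ p ^ k from ⟨p ^ i * p ^ j, by rw [← ht]; ring⟩)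
    have hsum : i + j + l = k := by
      apply Nat.pow_right_injective hp.two_le
      show p ^ (i + j + l) = p ^ k
      rw [pow_add, pow_add, ht]
    simp only [Finset.mem_coe, mem_filter, mem_product, mem_range, fact_pow_self hp]
    omega
  · rintro ⟨i, j⟩ hq
    simp only [Finset.mem_coe, mem_filter, mem_product, mem_range] at hq
    dsimp only
    rw [Finset.mem_coe, mem_T hpk]
    dsimp only
    rw [← pow_add, ← pow_add]
    congr 1
    omega
  · rintro ⟨x, y, z⟩ ht
    rw [Finset.mem_coe, mem_T hpk] at ht
    dsimp only at ht ⊢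
    obtain ⟨i, hik, rfl⟩ := (Nat.dvd_prime_pow hp).mp (show x ∣ p ^ k from ⟨y * z, by rw [← ht]; ring⟩)
    obtain ⟨j, hjk, rfl⟩ := (Nat.dvd_prime_pow hp).mp (show y ∣ p ^ k from ⟨p ^ i * z, by rw [← ht]; ring⟩)
    obtain ⟨l, hlk, rfl⟩ := (Nat.dvd_prime_pow hp).mp (show z ∣ p ^ k from ⟨p ^ i * p ^ j, by rw [← ht]; ring⟩)
    have hsum : i + j + l = k := by
      apply Nat.pow_right_injective hp.two_le
      show p ^ (i + j + l) = p ^ k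
      rw [pow_add, pow_add, ht]
    simp only [fact_pow_self hp, Prod.mk.injEq]
    refine ⟨trivial, trivial, ?_⟩
    congr 1
    omega
  · rintro ⟨i, j⟩ hq
    dsimp only
    simp only [fact_pow_self hp]

lemma Pf_prime_pow {p : ℕ} (hp : p.Prime) (k : ℕ) :
    (Pf (p ^ k)).card = (k + 2) / 2 := by
  have hpk : p ^ k ≠ 0 := pow_ne_zero k hp.pos.ne'
  have hr : (range ((k + 2) / 2)).card = (k + 2) / 2 := card_range _
  rw [← hr]
  apply card_nbij' (fun q => q.1.factorization p) (fun i => (p ^ i, p ^ (k - i - i)))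
  · rintro ⟨x, z⟩ ht
    rw [Finset.mem_coe, mem_Pf hpk] at ht
    dsimp only at ht ⊢
    obtain ⟨i, hik, rfl⟩ := (Nat.dvd_prime_pow hp).mp (show x ∣ p ^ k from ⟨x * z, by rw [← ht]; ring⟩)
    obtain ⟨l, hlk, rfl⟩ := (Nat.dvd_prime_pow hp).mp (show z ∣ p ^ k from ⟨p ^ i * p ^ i, by rw [← ht]; ring⟩)
    have hsum : i + i + l = k := by
      apply Nat.pow_right_injective hp.two_le
      show p ^ (i + i + l) = p ^ k
      rw [pow_add, pow_add, ht]
    rw [fact_pow_self hp, Finset.mem_coe, mem_range]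
    omega
  · rintro i hi
    rw [Finset.mem_coe, mem_range] at hi
    rw [Finset.mem_coe, mem_Pf hpk]
    dsimp only
    rw [← pow_add, ← pow_add]
    congr 1
    omega
  · rintro ⟨x, z⟩ ht
    rw [Finset.mem_coe, mem_Pf hpk] at ht
    dsimp only at ht ⊢
    obtain ⟨i, hik, rfl⟩ := (Nat.dvd_prime_pow hp).mp (show x ∣ p ^ k from ⟨x * z, by rw [← ht]; ring⟩)
    obtain ⟨l, hlk, rfl⟩ := (Nat.dvd_prime_pow hp).mp (show z ∣ p ^ k from ⟨p ^ i * p ^ i, by rw [← ht]; ring⟩)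
    have hsum : i + i + l = k := by
      apply Nat.pow_right_injective hp.two_le
      show p ^ (i + i + l) = p ^ k
      rw [pow_add, pow_add, ht]
    rw [fact_pow_self hp, Prod.mk.injEq]
    refine ⟨rfl, ?_⟩
    congr 1
    omega
  · rintro i hi
    dsimp only
    rw [fact_pow_self hp]


noncomputable section
open scoped Classical

def Ts (n : ℕ) : Finset (ℕ × ℕ × ℕ) :=
  (T n).filter fun t => t.1 ≤ t.2.1 ∧ t.2.1 ≤ t.2.2

lemma mem_Ts {n : ℕ} (hn : n ≠ 0) {t : ℕ × ℕ × ℕ} :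
    t ∈ Ts n ↔ t.1 * t.2.1 * t.2.2 = n ∧ t.1 ≤ t.2.1 ∧ t.2.1 ≤ t.2.2 := by
  simp [Ts, mem_filter, mem_T hn]

lemma sort3_mem_Ts {n : ℕ} (hn : n ≠ 0) {t : ℕ × ℕ × ℕ} (ht : t ∈ T n) :
    sort3 t ∈ Ts n := by
  rw [mem_Ts hn]
  exact ⟨by rw [sort3_mul]; exact (mem_T hn).mp ht, sort3_sorted t⟩

lemma fiber_eq {n : ℕ} (hn : n ≠ 0) {a b c : ℕ} (hs : (a, b, c) ∈ Ts n) :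
    (T n).filter (fun t => sort3 t = (a, b, c)) =
      ({(a,b,c), (a,c,b), (b,a,c), (b,c,a), (c,a,b), (c,b,a)} : Finset (ℕ × ℕ × ℕ)) := by
  rw [mem_Ts hn] at hs
  obtain ⟨hprod, hab, hbc⟩ := hs
  ext t
  simp only [mem_filter, mem_T hn, sort3_eq_iff hab hbc, mem_insert, mem_singleton]
  constructor
  · exact fun h => h.2
  · rintro (rfl | rfl | rfl | rfl | rfl | rfl) <;>
      exact ⟨by simp at hprod ⊢; linarith [hprod] , by tauto⟩


lemma card_perms_distinct {a b c : ℕ} (hab : a < b) (hbc : b < c) :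
    ({(a,b,c), (a,c,b), (b,a,c), (b,c,a), (c,a,b), (c,b,a)} : Finset (ℕ × ℕ × ℕ)).card = 6 := by
  rw [card_insert_of_notMem (by simp [Prod.ext_iff]; omega),
      card_insert_of_notMem (by simp [Prod.ext_iff]; omega),
      card_insert_of_notMem (by simp [Prod.ext_iff]; omega),
      card_insert_of_notMem (by simp [Prod.ext_iff]; omega),
      card_insert_of_notMem (by simp [Prod.ext_iff]; omega), card_singleton]

lemma card_perms_ab {a c : ℕ} (hac : a ≠ c) :
    ({(a,a,c), (a,c,a), (a,a,c), (a,c,a), (c,a,a), (c,a,a)} : Finset (ℕ × ℕ × ℕ)).card = 3 := by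
  have : ({(a,a,c), (a,c,a), (a,a,c), (a,c,a), (c,a,a), (c,a,a)} : Finset (ℕ × ℕ × ℕ)) =
      {(a,a,c), (a,c,a), (c,a,a)} := by
    ext t; simp only [mem_insert, mem_singleton]; tauto
  rw [this, card_insert_of_notMem (by simp [Prod.ext_iff]; omega),
      card_insert_of_notMem (by simp [Prod.ext_iff]; omega), card_singleton]

lemma card_perms_bc {a b : ℕ} (hab : a ≠ b) :
    ({(a,b,b), (a,b,b), (b,a,b), (b,b,a), (b,a,b), (b,b,a)} : Finset (ℕ × ℕ × ℕ)).card = 3 := by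
  have : ({(a,b,b), (a,b,b), (b,a,b), (b,b,a), (b,a,b), (b,b,a)} : Finset (ℕ × ℕ × ℕ)) =
      {(a,b,b), (b,a,b), (b,b,a)} := by
    ext t; simp only [mem_insert, mem_singleton]; tauto
  rw [this, card_insert_of_notMem (by simp [Prod.ext_iff]; omega),
      card_insert_of_notMem (by simp [Prod.ext_iff]; omega), card_singleton]

lemma card_perms_all (a : ℕ) :
    ({(a,a,a), (a,a,a), (a,a,a), (a,a,a), (a,a,a), (a,a,a)} : Finset (ℕ × ℕ × ℕ)).card = 1 := by
  simp

lemma card_T_eq {n : ℕ} (hn : n ≠ 0) :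
    (T n).card =
      6 * ((Ts n).filter fun s => ¬(s.1 = s.2.1 ∨ s.2.1 = s.2.2)).card
      + 3 * ((Ts n).filter fun s => (s.1 = s.2.1 ∨ s.2.1 = s.2.2) ∧ s.1 ≠ s.2.2).card
      + ((Ts n).filter fun s => s.1 = s.2.2).card := by
  rw [card_eq_sum_card_fiberwise (f := sort3) (t := Ts n) (fun t ht => sort3_mem_Ts hn ht)]
  have key : ∀ s ∈ Ts n, ((T n).filter fun t => sort3 t = s).card =
      if ¬(s.1 = s.2.1 ∨ s.2.1 = s.2.2) then 6 else if s.1 ≠ s.2.2 then 3 else 1 := by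
    rintro ⟨a, b, c⟩ hs
    have hs' := (mem_Ts hn).mp hs
    obtain ⟨hprod, hab, hbc⟩ := hs'
    dsimp only at hprod hab hbc ⊢
    rw [fiber_eq hn hs]
    split_ifs with h1 h2
    · rcases h1 with rfl | rfl
      · exact card_perms_ab (show a ≠ c by omega)
      · exact card_perms_bc (show a ≠ b by omega)
    · have hh : a = b ∧ b = c := by omega
      obtain ⟨rfl, rfl⟩ := hh
      exact card_perms_all a
    · exact card_perms_distinct (show a < b by omega) (show b < c by omega)
  rw [Finset.sum_congr rfl key]
  rw [Finset.sum_ite, Finset.sum_ite]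
  simp only [Finset.sum_const, smul_eq_mul]
  rw [Finset.filter_filter, Finset.filter_filter]
  have e2 : ((Ts n).filter fun s => ¬¬(s.1 = s.2.1 ∨ s.2.1 = s.2.2) ∧ ¬s.1 = s.2.2) =
      ((Ts n).filter fun s => (s.1 = s.2.1 ∨ s.2.1 = s.2.2) ∧ s.1 ≠ s.2.2) := by
    apply filter_congr; intro s _; simp only [not_not, ne_eq, eq_iff_iff]
  have e3 : ((Ts n).filter fun s => ¬¬(s.1 = s.2.1 ∨ s.2.1 = s.2.2) ∧ ¬¬s.1 = s.2.2) =
      ((Ts n).filter fun s => s.1 = s.2.2) := by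
    apply filter_congr
    rintro ⟨a, b, c⟩ hs
    obtain ⟨hprod, hab, hbc⟩ := (mem_Ts hn).mp hs
    dsimp only at hab hbc ⊢
    simp only [not_not, eq_iff_iff]
    constructor
    · exact fun h => h.2
    · intro h; exact ⟨by omega, h⟩
  rw [e2, e3]
  ring


lemma card_Pf_eq {n : ℕ} (hn : n ≠ 0) :
    (Pf n).card = ((Ts n).filter fun s => s.1 = s.2.1 ∨ s.2.1 = s.2.2).card := by
  apply card_nbij' (fun q => sort3 (q.1, q.1, q.2))
    (fun s => if s.1 = s.2.1 then (s.1, s.2.2) else (s.2.1, s.1))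
  · rintro ⟨x, z⟩ hq
    rw [Finset.mem_coe, mem_Pf hn] at hq
    dsimp only at hq ⊢
    rw [sort3_pair]
    rcases le_or_gt x z with h | h
    · rw [if_pos h]
      simp only [Finset.mem_coe, mem_filter, mem_Ts hn]
      exact ⟨⟨hq, le_refl x, h⟩, Or.inl trivial⟩
    · rw [if_neg (by omega)]
      simp only [Finset.mem_coe, mem_filter, mem_Ts hn]
      exact ⟨⟨by rw [← hq]; ring, le_of_lt h, le_refl x⟩, Or.inr trivial⟩
  · rintro ⟨a, b, c⟩ hs
    simp only [Finset.mem_coe, mem_filter, mem_Ts hn] at hs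
    obtain ⟨⟨hprod, hab, hbc⟩, hor⟩ := hs
    try dsimp only at hprod hab hbc hor ⊢
    rw [Finset.mem_coe, mem_Pf hn]
    split_ifs with h
    · subst h; dsimp only; exact hprod
    · have hbc' : b = c := by tauto
      subst hbc'; dsimp only; rw [← hprod]; ring
  · rintro ⟨x, z⟩ hq
    rw [Finset.mem_coe, mem_Pf hn] at hq
    dsimp only at hq ⊢
    rw [sort3_pair]
    rcases le_or_gt x z with h | h
    · rw [if_pos h]; simp
    · rw [if_neg (show ¬ x ≤ z by omega)]
      dsimp only
      rw [if_neg (show ¬ z = x by omega)]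
  · rintro ⟨a, b, c⟩ hs
    simp only [Finset.mem_coe, mem_filter, mem_Ts hn] at hs
    obtain ⟨⟨hprod, hab, hbc⟩, hor⟩ := hs
    try dsimp only at hprod hab hbc hor ⊢
    split_ifs with h
    · subst h
      rw [sort3_pair, if_pos hbc]
    · have hbc' : b = c := by tauto
      subst hbc'
      rw [sort3_pair, if_neg (by omega)]

lemma card_E_eq {n : ℕ} (hn : n ≠ 0) :
    ((Ts n).filter fun s => s.1 = s.2.2).card = (if ∃ e : ℕ, e ^ 3 = n then 1 else 0) := by
  split_ifs with h
  · obtain ⟨e, he⟩ := h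
    have : ((Ts n).filter fun s => s.1 = s.2.2) = {(e, e, e)} := by
      ext ⟨a, b, c⟩
      simp only [mem_filter, mem_Ts hn, mem_singleton, Prod.mk.injEq]
      constructor
      · rintro ⟨⟨hprod, hab, hbc⟩, hac⟩
        try dsimp only at hprod hab hbc hac
        have hb : a = b ∧ b = c := by omega
        obtain ⟨rfl, rfl⟩ := hb
        have : a ^ 3 = e ^ 3 := by rw [he]; rw [← hprod]; ring
        have := Nat.pow_left_injective (by norm_num) this
        exact ⟨this, this, this⟩
      · rintro ⟨rfl, rfl, rfl⟩
        exact ⟨⟨by rw [← he]; ring, le_refl _, le_refl _⟩, rfl⟩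
    rw [this, card_singleton]
  · convert card_empty
    rw [Finset.eq_empty_iff_forall_notMem]
    rintro ⟨a, b, c⟩ hmem
    simp only [mem_filter, mem_Ts hn] at hmem
    obtain ⟨⟨hprod, hab, hbc⟩, hac⟩ := hmem
    try dsimp only at hprod hab hbc hac
    have hb : a = b ∧ b = c := by omega
    obtain ⟨rfl, rfl⟩ := hb
    exact h ⟨a, by rw [← hprod]; ring⟩

lemma burnside {n : ℕ} (hn : n ≠ 0) :
    6 * (Ts n).card = (T n).card + 3 * (Pf n).card + 2 * (if ∃ e : ℕ, e ^ 3 = n then 1 else 0) := by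
  have hTs : (Ts n).card =
      ((Ts n).filter fun s => (s.1 = s.2.1 ∨ s.2.1 = s.2.2)).card
      + ((Ts n).filter fun s => ¬(s.1 = s.2.1 ∨ s.2.1 = s.2.2)).card :=
    (Finset.card_filter_add_card_filter_not _).symm
  have hsplit : ((Ts n).filter fun s => (s.1 = s.2.1 ∨ s.2.1 = s.2.2)).card =
      (((Ts n).filter fun s => (s.1 = s.2.1 ∨ s.2.1 = s.2.2)).filter fun s => s.1 ≠ s.2.2).card
      + (((Ts n).filter fun s => (s.1 = s.2.1 ∨ s.2.1 = s.2.2)).filter fun s => ¬ s.1 ≠ s.2.2).card := by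
    rw [Finset.card_filter_add_card_filter_not]
  have e1 : (((Ts n).filter fun s => (s.1 = s.2.1 ∨ s.2.1 = s.2.2)).filter fun s => s.1 ≠ s.2.2) =
      ((Ts n).filter fun s => (s.1 = s.2.1 ∨ s.2.1 = s.2.2) ∧ s.1 ≠ s.2.2) := by
    rw [Finset.filter_filter]
  have e2 : (((Ts n).filter fun s => (s.1 = s.2.1 ∨ s.2.1 = s.2.2)).filter fun s => ¬ s.1 ≠ s.2.2) =
      ((Ts n).filter fun s => s.1 = s.2.2) := by
    rw [Finset.filter_filter]
    apply filter_congr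
    rintro ⟨a, b, c⟩ hs
    obtain ⟨hprod, hab, hbc⟩ := (mem_Ts hn).mp hs
    dsimp only at hab hbc ⊢
    simp only [not_not, ne_eq, eq_iff_iff]
    constructor
    · exact fun hh => hh.2
    · intro hh; exact ⟨by omega, hh⟩
  have h4 : ((Ts n).filter fun s => (s.1 = s.2.1 ∨ s.2.1 = s.2.2)).card =
      ((Ts n).filter fun s => (s.1 = s.2.1 ∨ s.2.1 = s.2.2) ∧ s.1 ≠ s.2.2).card
      + ((Ts n).filter fun s => s.1 = s.2.2).card := by
    rw [hsplit, e1, e2]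
  rw [card_T_eq hn, card_Pf_eq hn, ← card_E_eq hn]
  omega

end

lemma card_T_prod {m : ℕ} (hm : m ≠ 0) :
    (T m).card = ∏ p ∈ m.primeFactors, (m.factorization p + 2).choose 2 := by
  have h_mult : ∀ x y : ℕ, Nat.Coprime x y →
      (T (x * y)).card = (T x).card * (T y).card := by
    intro x y hxy
    rcases eq_or_ne x 0 with rfl | hx
    · have hy1 : y = 1 := by simpa using hxy
      subst hy1
      simp [T_zero, T_one]
    rcases eq_or_ne y 0 with rfl | hy
    · have hx1 : x = 1 := by simpa using hxy
      subst hx1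
      simp [T_zero, T_one]
    exact T_mul hx hy hxy
  have hfac := Nat.multiplicative_factorization (fun n => (T n).card) h_mult T_one hm
  rw [hfac, Finsupp.prod, Nat.support_factorization]
  exact Finset.prod_congr rfl fun p hp =>
    T_prime_pow (Nat.prime_of_mem_primeFactors hp) _

lemma card_Pf_prod {m : ℕ} (hm : m ≠ 0) :
    (Pf m).card = ∏ p ∈ m.primeFactors, (m.factorization p + 2) / 2 := by
  have h_mult : ∀ x y : ℕ, Nat.Coprime x y →
      (Pf (x * y)).card = (Pf x).card * (Pf y).card := by
    intro x y hxy
    rcases eq_or_ne x 0 with rfl | hx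
    · have hy1 : y = 1 := by simpa using hxy
      subst hy1
      simp [Pf_zero, Pf_one]
    rcases eq_or_ne y 0 with rfl | hy
    · have hx1 : x = 1 := by simpa using hxy
      subst hx1
      simp [Pf_zero, Pf_one]
    exact Pf_mul hx hy hxy
  have hfac := Nat.multiplicative_factorization (fun n => (Pf n).card) h_mult Pf_one hm
  rw [hfac, Finsupp.prod, Nat.support_factorization]
  exact Finset.prod_congr rfl fun p hp =>
    Pf_prime_pow (Nat.prime_of_mem_primeFactors hp) _


end Stmt10Aux

open Stmt10Aux in
theorem stmt_10 (m : ℕ) (hm : 1 < m) :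
    (Nat.card {t : ℕ × ℕ × ℕ //
        0 < t.1 ∧ t.1 ≤ t.2.1 ∧ t.2.1 ≤ t.2.2 ∧ t.1 * t.2.1 * t.2.2 = m} : ℚ) =
      (1 / 6) * ∏ p ∈ m.primeFactors, (Nat.choose (m.factorization p + 2) 2 : ℚ) +
      (1 / 2) * ∏ p ∈ m.primeFactors, (((m.factorization p + 2) / 2 : ℕ) : ℚ) +
      (eps 3 m : ℚ) / 3 := by
  have hm0 : m ≠ 0 := by omega
  have hcard : Nat.card {t : ℕ × ℕ × ℕ //
      0 < t.1 ∧ t.1 ≤ t.2.1 ∧ t.2.1 ≤ t.2.2 ∧ t.1 * t.2.1 * t.2.2 = m} = (Ts m).card := by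
    rw [← Nat.card_eq_finsetCard]
    apply Nat.card_congr
    apply Equiv.subtypeEquivRight
    intro t
    rw [mem_Ts hm0]
    constructor
    · rintro ⟨h0, h1, h2, h3⟩
      exact ⟨h3, h1, h2⟩
    · rintro ⟨h3, h1, h2⟩
      refine ⟨?_, h1, h2, h3⟩
      rcases Nat.eq_zero_or_pos t.1 with h | h
      · rw [h] at h3
        simp at h3
        omega
      · exact h
  rw [hcard]
  have hb := burnside hm0
  have hT := card_T_prod hm0
  have hP := card_Pf_prod hm0
  have heps : eps 3 m = (if ∃ e : ℕ, e ^ 3 = m then 1 else 0) := by unfold eps; congr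
  rw [← heps] at hb
  rw [hT, hP] at hb
  have hq : (6 : ℚ) * ((Ts m).card : ℚ) =
      (∏ p ∈ m.primeFactors, ((m.factorization p + 2).choose 2 : ℚ))
      + 3 * (∏ p ∈ m.primeFactors, (((m.factorization p + 2) / 2 : ℕ) : ℚ))
      + 2 * (eps 3 m : ℚ) := by
    exact_mod_cast congrArg (fun n : ℕ => (n : ℚ)) hb
  linarith [hq]
end
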